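/- Let K be an infinite compact Hausdorff space. If K is scattered, then every finite signed Radon measure on K is purely atomic, i.e., a countable linear combination of Dirac measures; consequently the set M(K) of finite signed Radon measures on K has cardinality at most max(|K|^ω, 𝔠). -/

import Mathlib

open MeasureTheory

/-- On a scattered compact Hausdorff space, a finite regular measure is concentrated on a
countable set. -/
lemma scattered_countable_carrier {K : Type u} [TopologicalSpace K] [CompactSpace K] [T2Space K]
    [MeasurableSpace K] [BorelSpace K]
    (hscat : ∀ C : Set K, IsClosed C → C.Nonempty → ∃ x ∈ C, ∃ U : Set K, IsOpen U ∧ U ∩ C = {x})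
    (ν : Measure K) [IsFiniteMeasure ν] [ν.Regular] :
    ∃ A : Set K, A.Countable ∧ ν Aᶜ = 0 := by
  classical
  set A : Set K := {x | 0 < ν {x}} with hAdef
  have hA : A.Countable := by
    apply Measure.countable_meas_pos_of_disjoint_iUnion
      (As := fun x : K => ({x} : Set K))
    · exact fun x => measurableSet_singleton x
    · intro i j hij
      simp [Function.onFun, Set.disjoint_singleton, hij]
  refine ⟨A, hA, ?_⟩
  by_contra h
  have hAm : MeasurableSet Aᶜ := hA.measurableSet.compl
  -- get a compact subset of positive measure
  obtain ⟨C, hCsub, hCcomp, hCpos⟩ :=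
    hAm.exists_lt_isCompact_of_ne_top (μ := ν) (measure_ne_top ν _)
      (pos_iff_ne_zero.mpr h)
  -- the union of open sets null on C
  set U0 : Set K := ⋃₀ {U : Set K | IsOpen U ∧ ν (U ∩ C) = 0} with hU0def
  have hU0open : IsOpen U0 := isOpen_sUnion fun U hU => hU.1
  have hCclosed : IsClosed C := hCcomp.isClosed
  -- every compact subset of U0 ∩ C is null
  have hcompnull : ∀ C' : Set K, IsCompact C' → C' ⊆ C ∩ U0 → ν C' = 0 := by
    intro C' hC' hsub
    obtain ⟨t, ht⟩ := hC'.elim_finite_subcover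
      (fun U : {U : Set K // IsOpen U ∧ ν (U ∩ C) = 0} => (U : Set K))
      (fun U => U.2.1) (fun x hx => by
        obtain ⟨U, hU, hxU⟩ := (hsub hx).2
        exact Set.mem_iUnion.2 ⟨⟨U, hU⟩, hxU⟩)
    have : C' ⊆ ⋃ U ∈ t, ((U : Set K) ∩ C) := by
      intro x hx
      obtain ⟨U, hU, hxU⟩ := Set.mem_iUnion₂.1 (ht hx)
      exact Set.mem_iUnion₂.2 ⟨U, hU, hxU, (hsub hx).1⟩
    refine le_antisymm ?_ zero_le
    calc ν C' ≤ ν (⋃ U ∈ t, ((U : Set K) ∩ C)) := measure_mono this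
      _ ≤ ∑ U ∈ t, ν ((U : Set K) ∩ C) := measure_biUnion_finset_le t _
      _ = 0 := by simp [fun U : {U : Set K // IsOpen U ∧ ν (U ∩ C) = 0} => U.2.2]
  have hCU0 : ν (C ∩ U0) = 0 := by
    by_contra h'
    obtain ⟨C', hC'sub, hC'comp, hC'pos⟩ :=
      ((hCcomp.measurableSet).inter hU0open.measurableSet).exists_lt_isCompact_of_ne_top
        (μ := ν) (measure_ne_top ν _) (pos_iff_ne_zero.mpr h')
    exact absurd (hcompnull C' hC'comp hC'sub) (by simpa using hC'pos.ne')
  set S : Set K := C \ U0 with hSdef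
  have hSclosed : IsClosed S := hCclosed.sdiff hU0open
  have hSne : S.Nonempty := by
    rcases Set.eq_empty_or_nonempty S with hS | hS
    · exfalso
      have : C ⊆ C ∩ U0 := by
        intro x hx
        by_contra hx'
        have : x ∈ S := ⟨hx, fun h'' => hx' ⟨hx, h''⟩⟩
        simp [hS] at this
      have hle := measure_mono (μ := ν) this
      rw [hCU0] at hle
      exact absurd (le_antisymm hle zero_le) hCpos.ne'
    · exact hS
  obtain ⟨x, hxS, U, hUopen, hUS⟩ := hscat S hSclosed hSne
  have hxU : x ∈ U := by
    have : x ∈ U ∩ S := by rw [hUS]; exact rfl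
    exact this.1
  have hxnotU0 : x ∉ U0 := hxS.2
  have hνUC : ν (U ∩ C) ≠ 0 := by
    intro h'
    exact hxnotU0 ⟨U, ⟨hUopen, h'⟩, hxU⟩
  have hsub : U ∩ C ⊆ {x} ∪ (C ∩ U0) := by
    intro y hy
    by_cases hyS : y ∈ S
    · left
      have : y ∈ U ∩ S := ⟨hy.1, hyS⟩
      rw [hUS] at this; exact this
    · right
      refine ⟨hy.2, ?_⟩
      by_contra h''
      exact hyS ⟨hy.2, h''⟩
  have : ν (U ∩ C) ≤ ν {x} + ν (C ∩ U0) := le_trans (measure_mono hsub) (measure_union_le _ _)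
  rw [hCU0, add_zero] at this
  have hx_atom : 0 < ν {x} := lt_of_lt_of_le (pos_iff_ne_zero.mpr hνUC) this
  exact (hCsub hxS.1) hx_atom

/-- Representation of a regular signed measure on a scattered space. -/
lemma scattered_rep {K : Type u} [TopologicalSpace K] [CompactSpace K] [T2Space K] [Infinite K]
    [MeasurableSpace K] [BorelSpace K]
    (hscat : ∀ C : Set K, IsClosed C → C.Nonempty → ∃ x ∈ C, ∃ U : Set K, IsOpen U ∧ U ∩ C = {x})
    (μ : SignedMeasure K)
    (hpos : μ.toJordanDecomposition.posPart.Regular)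
    (hneg : μ.toJordanDecomposition.negPart.Regular) :
    ∃ (x : ℕ → K) (c : ℕ → ℝ), Summable (fun n => |c n|) ∧
      ∀ B : Set K, MeasurableSet B →
        μ B = ∑' n, Set.indicator B (fun _ => c n) (x n) := by
  classical
  haveI := hpos; haveI := hneg
  set pos := μ.toJordanDecomposition.posPart with hposdef
  set neg := μ.toJordanDecomposition.negPart with hnegdef
  have htv : μ.totalVariation = pos + neg := rfl
  obtain ⟨A₁, hA₁c, hA₁⟩ := scattered_countable_carrier hscat pos
  obtain ⟨A₂, hA₂c, hA₂⟩ := scattered_countable_carrier hscat neg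
  set A := A₁ ∪ A₂ with hAdef
  have htvA : μ.totalVariation Aᶜ = 0 := by
    rw [htv, Measure.add_apply]
    have h1 : pos Aᶜ = 0 :=
      measure_mono_null (Set.compl_subset_compl.2 Set.subset_union_left) hA₁
    have h2 : neg Aᶜ = 0 :=
      measure_mono_null (Set.compl_subset_compl.2 Set.subset_union_right) hA₂
    rw [h1, h2, add_zero]
  -- an injective enumeration covering `A`
  set D := A ∪ Set.range (Infinite.natEmbedding K) with hDdef
  have hDc : D.Countable := (hA₁c.union hA₂c).union (Set.countable_range _)
  have hDi : D.Infinite :=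
    (Set.infinite_range_of_injective (Infinite.natEmbedding K).injective).mono
      Set.subset_union_right
  haveI : Countable ↥D := hDc.to_subtype
  haveI : Infinite ↥D := hDi.to_subtype
  obtain ⟨d⟩ : Nonempty (Denumerable ↥D) := nonempty_denumerable_iff.mpr ⟨‹_›, ‹_›⟩
  set e : ↥D ≃ ℕ := @Denumerable.eqv ↥D d with hedef
  set x : ℕ → K := fun n => (e.symm n : K) with hxdef
  have hxinj : Function.Injective x := Subtype.val_injective.comp e.symm.injective
  have hrange : Set.range x = D := by
    ext a
    constructor
    · rintro ⟨n, rfl⟩; exact (e.symm n).2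
    · intro ha; exact ⟨e ⟨a, ha⟩, by simp [hxdef]⟩
  have hAR : A ⊆ Set.range x := hrange ▸ Set.subset_union_left
  set c : ℕ → ℝ := fun n => μ {x n} with hcdef
  -- bound on values
  have habs : ∀ B : Set K, MeasurableSet B → |μ B| ≤ (μ.totalVariation B).toReal := by
    intro B hB
    have hrep : μ B = (pos B).toReal - (neg B).toReal := by
      conv_lhs => rw [← μ.toSignedMeasure_toJordanDecomposition]
      rw [JordanDecomposition.toSignedMeasure, VectorMeasure.sub_apply,
        Measure.toSignedMeasure_apply_measurable hB, Measure.toSignedMeasure_apply_measurable hB]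
      rfl
    have htvB : (μ.totalVariation B).toReal = (pos B).toReal + (neg B).toReal := by
      rw [htv, Measure.add_apply, ENNReal.toReal_add (measure_ne_top _ _) (measure_ne_top _ _)]
    have h1 : (0:ℝ) ≤ (pos B).toReal := ENNReal.toReal_nonneg
    have h2 : (0:ℝ) ≤ (neg B).toReal := ENNReal.toReal_nonneg
    rw [hrep, htvB]
    exact abs_le.2 ⟨by linarith, by linarith⟩
  haveI : IsFiniteMeasure μ.totalVariation := by rw [htv]; infer_instance
  have hsum : Summable (fun n => (μ.totalVariation {x n}).toReal) :=
    summable_measure_toReal (fun n => measurableSet_singleton _)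
      (fun i j hij => by
        simp only [Function.onFun, Set.disjoint_singleton]
        exact fun h => hij (hxinj h))
  have hsummable : Summable (fun n => |c n|) :=
    Summable.of_nonneg_of_le (fun n => abs_nonneg _)
      (fun n => habs _ (measurableSet_singleton _)) hsum
  refine ⟨x, c, hsummable, ?_⟩
  intro B hB
  set R := Set.range x with hRdef
  have hRm : MeasurableSet R := (Set.countable_range x).measurableSet
  have hdisj : Disjoint (B ∩ R) (B \ R) :=
    Set.disjoint_sdiff_right.mono_left Set.inter_subset_right
  have hdecomp : μ B = μ (B ∩ R) + μ (B \ R) := by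
    conv_lhs => rw [← Set.inter_union_diff B R]
    exact VectorMeasure.of_union hdisj (hB.inter hRm) (hB.diff hRm)
  have hnull : μ (B \ R) = 0 := by
    apply μ.null_of_totalVariation_zero
    apply measure_mono_null _ htvA
    intro y hy
    exact fun hyA => hy.2 (hAR hyA)
  have hiUnion : B ∩ R = ⋃ n, B ∩ {x n} := by
    ext y
    simp only [Set.mem_inter_iff, Set.mem_iUnion, Set.mem_singleton_iff, hRdef,
      Set.mem_range]
    constructor
    · rintro ⟨hyB, n, rfl⟩; exact ⟨n, hyB, rfl⟩
    · rintro ⟨n, hyB, rfl⟩; exact ⟨hyB, n, rfl⟩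
  have hsum2 : μ (B ∩ R) = ∑' n, μ (B ∩ {x n}) := by
    rw [hiUnion]
    exact VectorMeasure.of_disjoint_iUnion (fun n => hB.inter (measurableSet_singleton _))
      (fun i j hij => by
        apply Set.disjoint_of_subset Set.inter_subset_right Set.inter_subset_right
        simp only [Set.disjoint_singleton]
        exact fun h => hij (hxinj h))
  have hterm : ∀ n, μ (B ∩ {x n}) = Set.indicator B (fun _ => c n) (x n) := by
    intro n
    by_cases h : x n ∈ B
    · rw [Set.inter_eq_self_of_subset_right (Set.singleton_subset_iff.2 h),
        Set.indicator_of_mem h]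
    · rw [Set.indicator_of_notMem h]
      have : B ∩ {x n} = ∅ := by
        ext y; simp only [Set.mem_inter_iff, Set.mem_singleton_iff, Set.mem_empty_iff_false,
          iff_false]
        rintro ⟨hyB, rfl⟩; exact h hyB
      rw [this]; exact μ.empty
  rw [hdecomp, hnull, add_zero, hsum2]
  exact tsum_congr hterm

/-- On an infinite scattered compact Hausdorff space `K`, every finite signed
Radon measure is purely atomic (a countable linear combination of Dirac measures with
absolutely summable coefficients); consequently the set `M(K)` of signed Radon measures has
cardinality at most `max(|K|^ω, 𝔠)`. -/
theorem stmt14 {K : Type u} [TopologicalSpace K] [CompactSpace K] [T2Space K] [Infinite K]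
    [MeasurableSpace K] [BorelSpace K]
    (hscat : ∀ C : Set K, IsClosed C → C.Nonempty → ∃ x ∈ C, ∃ U : Set K, IsOpen U ∧ U ∩ C = {x}) :
    (∀ μ : SignedMeasure K,
      μ.toJordanDecomposition.posPart.Regular → μ.toJordanDecomposition.negPart.Regular →
      ∃ (x : ℕ → K) (c : ℕ → ℝ), Summable (fun n => |c n|) ∧
        ∀ B : Set K, MeasurableSet B →
          μ B = ∑' n, Set.indicator B (fun _ => c n) (x n)) ∧
    Cardinal.mk {μ : SignedMeasure K //
        μ.toJordanDecomposition.posPart.Regular ∧ μ.toJordanDecomposition.negPart.Regular}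
      ≤ max (Cardinal.mk K ^ Cardinal.aleph0.{u}) Cardinal.continuum.{u} := by
  classical
  have h1 : ∀ μ : SignedMeasure K,
      μ.toJordanDecomposition.posPart.Regular → μ.toJordanDecomposition.negPart.Regular →
      ∃ (x : ℕ → K) (c : ℕ → ℝ), Summable (fun n => |c n|) ∧
        ∀ B : Set K, MeasurableSet B →
          μ B = ∑' n, Set.indicator B (fun _ => c n) (x n) :=
    fun μ hp hn => scattered_rep hscat μ hp hn
  refine ⟨h1, ?_⟩
  set val : (ℕ → K) × (ℕ → ℝ) → Set K → ℝ :=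
    fun p B => ∑' n, Set.indicator B (fun _ => p.2 n) (p.1 n) with hval
  set F : {μ : SignedMeasure K //
      μ.toJordanDecomposition.posPart.Regular ∧ μ.toJordanDecomposition.negPart.Regular} →
      (ℕ → K) × (ℕ → ℝ) :=
    fun μ => ((h1 μ.1 μ.2.1 μ.2.2).choose, (h1 μ.1 μ.2.1 μ.2.2).choose_spec.choose) with hF
  have hkey : ∀ μ, ∀ B : Set K, MeasurableSet B → (μ.1 : SignedMeasure K) B = val (F μ) B :=
    fun μ B hB => (h1 μ.1 μ.2.1 μ.2.2).choose_spec.choose_spec.2 B hB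
  have hf : Function.Injective F := by
    intro μ ν h
    apply Subtype.ext
    apply VectorMeasure.ext
    intro B hB
    rw [hkey μ B hB, hkey ν B hB, h]
  have hcard : Cardinal.mk ((ℕ → K) × (ℕ → ℝ)) =
      Cardinal.mk K ^ Cardinal.aleph0.{u} * Cardinal.continuum.{u} := by
    simp [Cardinal.mk_prod, Cardinal.mk_arrow, Cardinal.mk_real, Cardinal.lift_continuum,
      Cardinal.continuum_power_aleph0]
  calc Cardinal.mk {μ : SignedMeasure K //
        μ.toJordanDecomposition.posPart.Regular ∧ μ.toJordanDecomposition.negPart.Regular}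
      ≤ Cardinal.mk ((ℕ → K) × (ℕ → ℝ)) := Cardinal.mk_le_of_injective hf
    _ = Cardinal.mk K ^ Cardinal.aleph0.{u} * Cardinal.continuum.{u} := hcard
    _ = max (Cardinal.mk K ^ Cardinal.aleph0.{u}) Cardinal.continuum.{u} :=
        Cardinal.mul_eq_max
          (le_trans (Cardinal.aleph0_le_mk K)
            (Cardinal.self_le_power _ Cardinal.one_le_aleph0))
          Cardinal.aleph0_le_continuum
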